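/- Let w(φ) = cos φ + sin φ/√3, β = 10^{−4.1}, ε = 10^{−3.9}. Then min{ 1.5002 / ((1−ε)·w(β) + ε·w(π/6)), √3 / (ε·w(π/6 − β) + (1−ε)·w(π/6)) } ≥ 1.5 + 5·10^{−13}. -/

import Mathlib

open Real

noncomputable def w (φ : ℝ) : ℝ := Real.cos φ + Real.sin φ / Real.sqrt 3

set_option maxHeartbeats 1000000 in
theorem final_numeric_bound (β ε : ℝ)
    (hβ : β = (10:ℝ) ^ (-4.1 : ℝ)) (hε : ε = (10:ℝ) ^ (-3.9 : ℝ)) :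
    1.5 + 5 * (10:ℝ) ^ (-13 : ℝ) ≤
      min (1.5002 / ((1 - ε) * w β + ε * w (π/6)))
          (Real.sqrt 3 / (ε * w (π/6 - β) + (1 - ε) * w (π/6))) := by
  have hK : (10:ℝ) ^ (-13 : ℝ) = 1e-13 := by
    rw [show (-13:ℝ) = ((-13:ℤ):ℝ) by norm_num, Real.rpow_intCast]; norm_num
  -- bounds on β
  have hβpos : 0 < β := by rw [hβ]; positivity
  have hβpow : β ^ (10:ℕ) = 1e-41 := by
    rw [hβ, ← Real.rpow_natCast ((10:ℝ)^(-4.1:ℝ)), ← Real.rpow_mul (by norm_num)]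
    rw [show (-4.1:ℝ) * (10:ℕ) = ((-41:ℤ):ℝ) by push_cast; ring, Real.rpow_intCast]
    norm_num
  have hβ1 : 7.9e-5 ≤ β := by
    by_contra h; push_neg at h
    have := pow_le_pow_left₀ hβpos.le h.le 10
    rw [hβpow] at this; norm_num at this
  have hβ2 : β ≤ 8e-5 := by
    by_contra h; push_neg at h
    have := pow_le_pow_left₀ (by norm_num : (0:ℝ) ≤ 8e-5) h.le 10
    rw [hβpow] at this; norm_num at this
  -- bounds on ε
  have hεpos : 0 < ε := by rw [hε]; positivity
  have hεpow : ε ^ (10:ℕ) = 1e-39 := by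
    rw [hε, ← Real.rpow_natCast ((10:ℝ)^(-3.9:ℝ)), ← Real.rpow_mul (by norm_num)]
    rw [show (-3.9:ℝ) * (10:ℕ) = ((-39:ℤ):ℝ) by push_cast; ring, Real.rpow_intCast]
    norm_num
  have hε1 : 1.2e-4 ≤ ε := by
    by_contra h; push_neg at h
    have := pow_le_pow_left₀ hεpos.le h.le 10
    rw [hεpow] at this; norm_num at this
  have hε2 : ε ≤ 1.3e-4 := by
    by_contra h; push_neg at h
    have := pow_le_pow_left₀ (by norm_num : (0:ℝ) ≤ 1.3e-4) h.le 10
    rw [hεpow] at this; norm_num at this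
  -- exact product
  have h8 : ε * β = 1e-8 := by
    rw [hβ, hε, ← Real.rpow_add (by norm_num)]
    rw [show (-3.9:ℝ) + -4.1 = ((-8:ℤ):ℝ) by push_cast; ring, Real.rpow_intCast]
    norm_num
  clear hβpow hεpow hβ hε
  -- sqrt 3
  set s := Real.sqrt 3 with hs_def
  have hs : s ^ 2 = 3 := Real.sq_sqrt (by norm_num)
  have hspos : 0 < s := Real.sqrt_pos.2 (by norm_num)
  have hs1 : 1.732 ≤ s := by nlinarith
  have hs2 : s ≤ 1.7321 := by nlinarith
  -- w values
  have hw6 : w (π/6) = 2*s/3 := by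
    unfold w
    rw [Real.cos_pi_div_six, Real.sin_pi_div_six, ← hs_def]
    field_simp
    linear_combination (-1:ℝ) * hs
  have hw6b : w (π/6 - β) = (2*s/3) * Real.cos β := by
    unfold w
    rw [Real.cos_sub, Real.sin_sub, Real.cos_pi_div_six, Real.sin_pi_div_six, ← hs_def]
    field_simp
    linear_combination (-1 * Real.cos β) * hs
  -- trig bounds
  have hcos1 : Real.cos β ≤ 1 := Real.cos_le_one β
  have hcoslb : 1 - β^2/2 ≤ Real.cos β := Real.one_sub_sq_div_two_le_cos
  have hsinub : Real.sin β ≤ β := (Real.sin_lt hβpos).le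
  have hsinpos : 0 < Real.sin β :=
    Real.sin_pos_of_pos_of_lt_pi hβpos (by nlinarith [Real.pi_gt_three])
  -- 1 - cos β lower bound via half angle
  have hcosid : Real.cos β = 1 - 2 * Real.sin (β/2) ^ 2 := by
    have h1 := Real.cos_two_mul' (β/2)
    have h2 := Real.sin_sq_add_cos_sq (β/2)
    rw [show 2 * (β/2) = β by ring] at h1
    linarith
  have hhalf : β/2 - (β/2)^3/4 < Real.sin (β/2) :=
    by have h3 : 0 < (β/2)^3 := by positivity
       have := Real.sin_gt_sub_cube (x := β/2) (by linarith); linarith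
  have hLpos : 0 < β/2 - (β/2)^3/4 := by nlinarith
  have hsinhalfsq : (β/2 - (β/2)^3/4)^2 ≤ Real.sin (β/2)^2 :=
    pow_le_pow_left₀ hLpos.le hhalf.le 2
  have hδ : 3.9e-13 ≤ ε * (1 - Real.cos β) := by
    have e1 : ε * (1 - Real.cos β) = 2*ε*Real.sin (β/2)^2 := by rw [hcosid]; ring
    have e2 : 2*ε*(β/2 - (β/2)^3/4)^2 ≤ 2*ε*Real.sin (β/2)^2 :=
      mul_le_mul_of_nonneg_left hsinhalfsq (by positivity)
    have e3 : 2*ε*(β/2 - (β/2)^3/4)^2 = (ε*β)*(β/2)*(1-β^2/16)^2 := by ring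
    rw [e3, h8] at e2
    have e4 : (3.9e-13:ℝ) ≤ 1e-8*(β/2)*(1-β^2/16)^2 := by nlinarith [sq_nonneg (β^2/16)]
    linarith
  -- branch bounds
  rw [hK]
  apply le_min
  · -- first branch
    have hsinover : Real.sin β / s ≤ 4.7e-5 := by
      rw [div_le_iff₀ hspos]; nlinarith
    have hsinover0 : 0 ≤ Real.sin β / s := by positivity
    have hwβub : w β ≤ 1.000047 := by unfold w; rw [← hs_def]; linarith
    have hwβlb : 0.9999 ≤ w β := by unfold w; rw [← hs_def]; nlinarith
    have hDpos : 0 < (1 - ε) * w β + ε * w (π/6) := by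
      rw [hw6]; nlinarith
    rw [le_div_iff₀ hDpos, hw6]
    nlinarith [mul_nonneg (sub_nonneg.2 hε2) (sub_nonneg.2 (by nlinarith : w β ≤ 2*s/3))]
  · -- second branch
    rw [hw6, hw6b]
    have hDpos : 0 < ε * ((2*s/3) * Real.cos β) + (1 - ε) * (2*s/3) := by nlinarith
    rw [le_div_iff₀ hDpos]
    have h9 : (1.5 + 5 * 1e-13) * ((2:ℝ)/3) * (ε * Real.cos β + (1 - ε)) ≤ 1 := by nlinarith
    calc (1.5 + 5 * 1e-13) * (ε * ((2*s/3) * Real.cos β) + (1 - ε) * (2*s/3))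
        = s * ((1.5 + 5 * 1e-13) * ((2:ℝ)/3) * (ε * Real.cos β + (1 - ε))) := by ring
      _ ≤ s * 1 := mul_le_mul_of_nonneg_left h9 hspos.le
      _ = s := mul_one s
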